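/- arXiv:1409.4204 — 2 statements merged into one kernel-verified Lean document; each statement's English description precedes it below -/
import Mathlib

section
/- The commutator subgroup [G,G] of G coincides with the center of G and equals the two-element subgroup {I, −I}. Consequently the abelianization G/[G,G] is isomorphic to (ℤ/2ℤ)⁴. -/
open Matrix Complex

noncomputable def T : Fin 5 → Matrix (Fin 4) (Fin 4) ℂ :=
  ![!![1,0,0,0; 0,-1,0,0; 0,0,1,0; 0,0,0,-1],
    !![0,I,0,0; -I,0,0,0; 0,0,0,-I; 0,0,I,0],
    !![0,1,0,0; 1,0,0,0; 0,0,0,1; 0,0,1,0],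
    !![0,0,0,1; 0,0,-1,0; 0,-1,0,0; 1,0,0,0],
    !![0,0,0,I; 0,0,-I,0; 0,I,0,0; -I,0,0,0]]

abbrev Mx := Matrix (Fin 4) (Fin 4) ℂ

theorem mul4 {α} [NonUnitalNonAssocSemiring α]
    (a11 a12 a13 a14 a21 a22 a23 a24 a31 a32 a33 a34 a41 a42 a43 a44
     b11 b12 b13 b14 b21 b22 b23 b24 b31 b32 b33 b34 b41 b42 b43 b44 : α) :
    !![a11,a12,a13,a14; a21,a22,a23,a24; a31,a32,a33,a34; a41,a42,a43,a44] *
    !![b11,b12,b13,b14; b21,b22,b23,b24; b31,b32,b33,b34; b41,b42,b43,b44] =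
    !![a11*b11+a12*b21+a13*b31+a14*b41, a11*b12+a12*b22+a13*b32+a14*b42,
       a11*b13+a12*b23+a13*b33+a14*b43, a11*b14+a12*b24+a13*b34+a14*b44;
       a21*b11+a22*b21+a23*b31+a24*b41, a21*b12+a22*b22+a23*b32+a24*b42,
       a21*b13+a22*b23+a23*b33+a24*b43, a21*b14+a22*b24+a23*b34+a24*b44;
       a31*b11+a32*b21+a33*b31+a34*b41, a31*b12+a32*b22+a33*b32+a34*b42,
       a31*b13+a32*b23+a33*b33+a34*b43, a31*b14+a32*b24+a33*b34+a34*b44;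
       a41*b11+a42*b21+a43*b31+a44*b41, a41*b12+a42*b22+a43*b32+a44*b42,
       a41*b13+a42*b23+a43*b33+a44*b43, a41*b14+a42*b24+a43*b34+a44*b44] := by
  ext i j
  fin_cases i <;> fin_cases j <;> simp [Matrix.mul_apply, Fin.sum_univ_four]

theorem T0eq : T 0 = !![1,0,0,0; 0,-1,0,0; 0,0,1,0; 0,0,0,-1] := rfl
theorem T1eq : T 1 = !![0,I,0,0; -I,0,0,0; 0,0,0,-I; 0,0,I,0] := rfl
theorem T2eq : T 2 = !![0,1,0,0; 1,0,0,0; 0,0,0,1; 0,0,1,0] := rfl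
theorem T3eq : T 3 = !![0,0,0,1; 0,0,-1,0; 0,-1,0,0; 1,0,0,0] := rfl
theorem T4eq : T 4 = !![0,0,0,I; 0,0,-I,0; 0,I,0,0; -I,0,0,0] := rfl

theorem one4 : (1 : Mx) = !![1,0,0,0; 0,1,0,0; 0,0,1,0; 0,0,0,1] := by
  ext i j
  fin_cases i <;> fin_cases j <;>
    simp [Matrix.one_apply, Matrix.vecHead, Matrix.vecTail]

theorem sq0 : T 0 * T 0 = 1 := by rw [T0eq, one4, mul4]; norm_num
theorem sq1 : T 1 * T 1 = 1 := by rw [T1eq, one4, mul4]; norm_num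
theorem sq2 : T 2 * T 2 = 1 := by rw [T2eq, one4, mul4]; norm_num
theorem sq3 : T 3 * T 3 = 1 := by rw [T3eq, one4, mul4]; norm_num
theorem sq4 : T 4 * T 4 = 1 := by rw [T4eq, one4, mul4]; norm_num

theorem Tsq : ∀ i : Fin 5, T i * T i = 1 := by
  intro i
  fin_cases i
  exacts [sq0, sq1, sq2, sq3, sq4]

theorem sw10 : T 1 * T 0 = -(T 0 * T 1) := by rw [T0eq, T1eq, mul4, mul4]; norm_num
theorem sw20 : T 2 * T 0 = -(T 0 * T 2) := by rw [T0eq, T2eq, mul4, mul4]; norm_num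
theorem sw30 : T 3 * T 0 = -(T 0 * T 3) := by rw [T0eq, T3eq, mul4, mul4]; norm_num
theorem sw21 : T 2 * T 1 = -(T 1 * T 2) := by rw [T1eq, T2eq, mul4, mul4]; norm_num
theorem sw31 : T 3 * T 1 = -(T 1 * T 3) := by rw [T1eq, T3eq, mul4, mul4]; norm_num
theorem sw32 : T 3 * T 2 = -(T 2 * T 3) := by rw [T2eq, T3eq, mul4, mul4]; norm_num
theorem T4prod : T 4 = T 0 * (T 1 * (T 2 * T 3)) := by
  rw [T0eq, T1eq, T2eq, T3eq, T4eq, mul4, mul4, mul4]; norm_num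

-- assoc-threaded versions
theorem sq0' (x : Mx) : T 0 * (T 0 * x) = x := by rw [← mul_assoc, sq0, one_mul]
theorem sq1' (x : Mx) : T 1 * (T 1 * x) = x := by rw [← mul_assoc, sq1, one_mul]
theorem sq2' (x : Mx) : T 2 * (T 2 * x) = x := by rw [← mul_assoc, sq2, one_mul]
theorem sq3' (x : Mx) : T 3 * (T 3 * x) = x := by rw [← mul_assoc, sq3, one_mul]
theorem sw10' (x : Mx) : T 1 * (T 0 * x) = -(T 0 * (T 1 * x)) := by
  rw [← mul_assoc, sw10, neg_mul, mul_assoc]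
theorem sw20' (x : Mx) : T 2 * (T 0 * x) = -(T 0 * (T 2 * x)) := by
  rw [← mul_assoc, sw20, neg_mul, mul_assoc]
theorem sw30' (x : Mx) : T 3 * (T 0 * x) = -(T 0 * (T 3 * x)) := by
  rw [← mul_assoc, sw30, neg_mul, mul_assoc]
theorem sw21' (x : Mx) : T 2 * (T 1 * x) = -(T 1 * (T 2 * x)) := by
  rw [← mul_assoc, sw21, neg_mul, mul_assoc]
theorem sw31' (x : Mx) : T 3 * (T 1 * x) = -(T 1 * (T 3 * x)) := by
  rw [← mul_assoc, sw31, neg_mul, mul_assoc]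
theorem sw32' (x : Mx) : T 3 * (T 2 * x) = -(T 2 * (T 3 * x)) := by
  rw [← mul_assoc, sw32, neg_mul, mul_assoc]

noncomputable def M (a b c d : Bool) : Mx :=
  (cond a (T 0) 1) * ((cond b (T 1) 1) * ((cond c (T 2) 1) * (cond d (T 3) 1)))

noncomputable def NF (s a b c d : Bool) : Mx :=
  cond s (-1) 1 * M a b c d

def sgn (a b c d a' b' c' d' : Bool) : Bool :=
  (a' && (b ^^ (c ^^ d))) ^^ ((b' && (c ^^ d)) ^^ (c' && d))

theorem Mmul (a b c d a' b' c' d' : Bool) :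
    M a b c d * M a' b' c' d' =
      NF (sgn a b c d a' b' c' d') (a ^^ a') (b ^^ b') (c ^^ c') (d ^^ d') := by
  cases a <;> cases b <;> cases c <;> cases d <;>
    cases a' <;> cases b' <;> cases c' <;> cases d' <;>
    simp only [M, NF, sgn, cond_true, cond_false, one_mul, mul_one, mul_assoc,
      Bool.false_and, Bool.true_and, Bool.and_false, Bool.and_true,
      Bool.false_xor, Bool.true_xor, Bool.xor_false, Bool.xor_true,
      Bool.not_true, Bool.not_false,
      neg_mul, mul_neg, neg_neg, neg_one_mul,
      sq0, sq1, sq2, sq3, sq0', sq1', sq2', sq3',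
      sw10, sw20, sw30, sw21, sw31, sw32,
      sw10', sw20', sw30', sw21', sw31', sw32']

theorem NFc (s a b c d : Bool) : NF s a b c d = cond s (-1) 1 * M a b c d := rfl

theorem NFneg (s a b c d : Bool) : -NF s a b c d = NF (!s) a b c d := by
  cases s <;> rw [NFc, NFc] <;>
    simp only [cond_true, cond_false, one_mul, neg_one_mul, neg_neg,
      Bool.not_true, Bool.not_false]

theorem NFone : NF false false false false false = 1 := by
  simp [NF, M]

theorem NFnegone : NF true false false false false = -1 := by
  simp [NF, M]

theorem NFmul (s a b c d s' a' b' c' d' : Bool) :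
    NF s a b c d * NF s' a' b' c' d' =
      NF (s ^^ (s' ^^ sgn a b c d a' b' c' d'))
        (a ^^ a') (b ^^ b') (c ^^ c') (d ^^ d') := by
  cases s <;> cases s' <;> rw [NFc, NFc] <;>
    simp only [cond_true, cond_false, one_mul, neg_one_mul, neg_mul, mul_neg,
      Bool.false_xor, Bool.true_xor, Bool.not_not, neg_neg, Mmul, NFneg]

theorem T0NF : T 0 = NF false true false false false := by simp [NF, M]
theorem T1NF : T 1 = NF false false true false false := by simp [NF, M]
theorem T2NF : T 2 = NF false false false true false := by simp [NF, M]
theorem T3NF : T 3 = NF false false false false true := by simp [NF, M]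
theorem T4NF : T 4 = NF false true true true true := by
  rw [T4prod]; simp [NF, M]

theorem Mne0 (a b c d : Bool) : M a b c d ≠ 0 := by
  intro h
  have h2 := Mmul a b c d a b c d
  rw [h, zero_mul] at h2
  simp only [Bool.xor_self] at h2
  cases hq : sgn a b c d a b c d <;> rw [hq] at h2
  · rw [NFone] at h2; exact one_ne_zero h2.symm
  · rw [NFnegone] at h2; exact one_ne_zero (neg_eq_zero.mp h2.symm)

theorem NF_inj (s s' a b c d : Bool) :
    NF s a b c d = NF s' a b c d ↔ s = s' := by
  constructor
  · intro h
    cases s <;> cases s'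
    case false.false => rfl
    case true.true => rfl
    all_goals
      exfalso
      rw [NFc, NFc] at h
      simp only [cond_true, cond_false, one_mul, neg_one_mul] at h
      apply Mne0 a b c d
      have h2 : (2 : ℂ) • M a b c d = 0 := by
        rw [two_smul]
        first
        | (nth_rewrite 2 [h]; simp)
        | (nth_rewrite 2 [← h]; simp)
      rcases smul_eq_zero.mp h2 with h3 | h3
      · norm_num at h3
      · exact h3
  · rintro rfl; rfl

/-- The subgroup of `GL(4,ℂ)` generated by `T 0, …, T 4`. -/
noncomputable def Ggrp : Subgroup ((Matrix (Fin 4) (Fin 4) ℂ)ˣ) :=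
  Subgroup.closure {g | ∃ m : Fin 5, (g : Matrix (Fin 4) (Fin 4) ℂ) = T m}

/-- The underlying matrix of an element of `G`. -/
noncomputable def mat (v : Ggrp) : Matrix (Fin 4) (Fin 4) ℂ :=
  ((v : (Matrix (Fin 4) (Fin 4) ℂ)ˣ) : Matrix (Fin 4) (Fin 4) ℂ)

noncomputable def tu (i : Fin 5) : Mxˣ := ⟨T i, T i, Tsq i, Tsq i⟩

noncomputable def gg (i : Fin 5) : Ggrp :=
  ⟨tu i, Subgroup.subset_closure ⟨i, rfl⟩⟩

theorem mat_gg (i : Fin 5) : mat (gg i) = T i := rfl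

theorem mat_mul (u v : Ggrp) : mat (u * v) = mat u * mat v := rfl

theorem mat_one : mat 1 = 1 := rfl

theorem mat_inj {u v : Ggrp} (h : mat u = mat v) : u = v :=
  Subtype.ext (Units.ext h)

theorem units_inv_val (u : Mxˣ) {s a b c d : Bool} (h : (u : Mx) = NF s a b c d) :
    ((u⁻¹ : Mxˣ) : Mx) = NF (s ^^ sgn a b c d a b c d) a b c d := by
  apply Units.inv_eq_of_mul_eq_one_right
  rw [h, NFmul]
  have hb : ∀ s q : Bool, (s ^^ ((s ^^ q) ^^ q)) = false := by decide
  rw [hb]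
  simp only [Bool.xor_self]
  exact NFone

theorem mat_inv (u : Ggrp) {s a b c d : Bool} (h : mat u = NF s a b c d) :
    mat u⁻¹ = NF (s ^^ sgn a b c d a b c d) a b c d :=
  units_inv_val (u : Mxˣ) h

theorem classify_units : ∀ u : Mxˣ, u ∈ Ggrp → ∃ s a b c d : Bool,
    (u : Mx) = NF s a b c d := by
  intro u hu
  refine Subgroup.closure_induction
    (p := fun (x : Mxˣ) _ => ∃ s a b c d : Bool, (x : Mx) = NF s a b c d) ?_ ?_ ?_ ?_ hu
  · rintro x ⟨m, hm⟩
    fin_cases m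
    · exact ⟨false, true, false, false, false, by rw [hm]; exact T0NF⟩
    · exact ⟨false, false, true, false, false, by rw [hm]; exact T1NF⟩
    · exact ⟨false, false, false, true, false, by rw [hm]; exact T2NF⟩
    · exact ⟨false, false, false, false, true, by rw [hm]; exact T3NF⟩
    · exact ⟨false, true, true, true, true, by rw [hm]; exact T4NF⟩
  · exact ⟨false, false, false, false, false, by rw [Units.val_one]; exact NFone.symm⟩
  · rintro x y _ _ ⟨s, a, b, c, d, hx⟩ ⟨s', a', b', c', d', hy⟩
    exact ⟨_, _, _, _, _, by rw [Units.val_mul, hx, hy, NFmul]⟩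
  · rintro x _ ⟨s, a, b, c, d, hx⟩
    exact ⟨_, _, _, _, _, units_inv_val x hx⟩

theorem classify (u : Ggrp) : ∃ s a b c d : Bool, mat u = NF s a b c d :=
  classify_units u.1 u.2

open scoped commutatorElement

noncomputable def c01 : Ggrp := ⁅gg 0, gg 1⁆

theorem mat_gg_inv (i : Fin 5) : mat (gg i)⁻¹ = T i := rfl

theorem mat_c01 : mat c01 = -1 := by
  show mat (gg 0 * gg 1 * (gg 0)⁻¹ * (gg 1)⁻¹) = -1
  rw [mat_mul, mat_mul, mat_mul, mat_gg, mat_gg, mat_gg_inv, mat_gg_inv]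
  simp [mul_assoc, sw10', sq1, sq0', mul_neg, mul_one, sq0, sq1']

theorem NF0or (s : Bool) :
    NF s false false false false = 1 ∨ NF s false false false false = -1 := by
  cases s
  · exact Or.inl NFone
  · exact Or.inr NFnegone

theorem commK (u v : Ggrp) : mat ⁅u, v⁆ = 1 ∨ mat ⁅u, v⁆ = -1 := by
  obtain ⟨s, a, b, c, d, hu⟩ := classify u
  obtain ⟨s', a', b', c', d', hv⟩ := classify v
  rw [commutatorElement_def, mat_mul, mat_mul, mat_mul, hu, hv,
    mat_inv u hu, mat_inv v hv, NFmul, NFmul, NFmul]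
  have hbit : ∀ x y : Bool, (((x ^^ y) ^^ x) ^^ y) = false := by decide
  rw [hbit, hbit, hbit, hbit]
  exact NF0or _

noncomputable def K : Subgroup Ggrp where
  carrier := {u | mat u = 1 ∨ mat u = -1}
  one_mem' := Or.inl mat_one
  mul_mem' := by
    rintro u v (h | h) (h' | h') <;>
      [left; right; right; left] <;>
      rw [mat_mul, h, h'] <;> simp
  inv_mem' := by
    rintro u (h | h)
    · have hu : u = 1 := mat_inj (h.trans mat_one.symm)
      rw [hu, inv_one]; exact Or.inl mat_one
    · have huu : u * u = 1 := by
        apply mat_inj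
        rw [mat_mul, h, mat_one]; simp
      rw [inv_eq_of_mul_eq_one_right huu]
      exact Or.inr h

theorem mem_K_iff (u : Ggrp) : u ∈ K ↔ (mat u = 1 ∨ mat u = -1) := Iff.rfl

theorem commutator_eq_K : commutator Ggrp = K := by
  apply le_antisymm
  · rw [commutator_def]
    exact Subgroup.commutator_le.mpr fun g _ h _ => commK g h
  · intro u hu
    rcases (mem_K_iff u).mp hu with h | h
    · have : u = 1 := mat_inj (h.trans mat_one.symm)
      rw [this]; exact one_mem _
    · have : u = c01 := mat_inj (h.trans mat_c01.symm)
      rw [this, c01, commutator_def]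
      exact Subgroup.commutator_mem_commutator (Subgroup.mem_top _) (Subgroup.mem_top _)

theorem center_eq_K : Subgroup.center Ggrp = K := by
  apply le_antisymm
  · intro u hu
    obtain ⟨s, a, b, c, d, h⟩ := classify u
    have key : ∀ i : Fin 5, T i * mat u = mat u * T i := by
      intro i
      have := Subgroup.mem_center_iff.mp hu (gg i)
      calc T i * mat u = mat (gg i * u) := by rw [mat_mul, mat_gg]
        _ = mat (u * gg i) := by rw [this]
        _ = mat u * T i := by rw [mat_mul, mat_gg]
    have h0 := key 0
    have h1 := key 1
    have h2 := key 2
    have h3 := key 3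
    rw [h, T0NF, NFmul, NFmul] at h0
    rw [h, T1NF, NFmul, NFmul] at h1
    rw [h, T2NF, NFmul, NFmul] at h2
    rw [h, T3NF, NFmul, NFmul] at h3
    simp only [Bool.xor_true, Bool.xor_false, Bool.true_xor, Bool.false_xor] at h0 h1 h2 h3
    rw [NF_inj] at h0 h1 h2 h3
    have hbits : a = false ∧ b = false ∧ c = false ∧ d = false := by
      clear h key hu
      revert h0 h1 h2 h3
      revert s a b c d
      decide
    obtain ⟨rfl, rfl, rfl, rfl⟩ := hbits
    rw [mem_K_iff, h]
    exact NF0or s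
  · intro u hu
    apply Subgroup.mem_center_iff.mpr
    intro g
    apply mat_inj
    rcases (mem_K_iff u).mp hu with h | h <;>
      rw [mat_mul, mat_mul, h] <;> simp

open scoped Classical in
noncomputable def tst (A B : Mx) : ZMod 2 := if A * B = B * A then 0 else 1

theorem commNF0 (s a b c d : Bool) :
    NF s a b c d * T 0 = T 0 * NF s a b c d ↔ (b ^^ (c ^^ d)) = false := by
  rw [T0NF, NFmul, NFmul]
  simp only [Bool.xor_true, Bool.xor_false, Bool.true_xor, Bool.false_xor]
  rw [NF_inj]
  revert s a b c d; decide

theorem commNF1 (s a b c d : Bool) :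
    NF s a b c d * T 1 = T 1 * NF s a b c d ↔ (a ^^ (c ^^ d)) = false := by
  rw [T1NF, NFmul, NFmul]
  simp only [Bool.xor_true, Bool.xor_false, Bool.true_xor, Bool.false_xor]
  rw [NF_inj]
  revert s a b c d; decide

theorem commNF2 (s a b c d : Bool) :
    NF s a b c d * T 2 = T 2 * NF s a b c d ↔ (a ^^ (b ^^ d)) = false := by
  rw [T2NF, NFmul, NFmul]
  simp only [Bool.xor_true, Bool.xor_false, Bool.true_xor, Bool.false_xor]
  rw [NF_inj]
  revert s a b c d; decide

theorem commNF3 (s a b c d : Bool) :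
    NF s a b c d * T 3 = T 3 * NF s a b c d ↔ (a ^^ (b ^^ c)) = false := by
  rw [T3NF, NFmul, NFmul]
  simp only [Bool.xor_true, Bool.xor_false, Bool.true_xor, Bool.false_xor]
  rw [NF_inj]
  revert s a b c d; decide

theorem tstNF0 (s a b c d : Bool) :
    tst (NF s a b c d) (T 0) = cond (b ^^ (c ^^ d)) 1 0 := by
  simp only [tst, commNF0]
  cases hβ : (b ^^ (c ^^ d)) <;> simp

theorem tstNF1 (s a b c d : Bool) :
    tst (NF s a b c d) (T 1) = cond (a ^^ (c ^^ d)) 1 0 := by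
  simp only [tst, commNF1]
  cases hβ : (a ^^ (c ^^ d)) <;> simp

theorem tstNF2 (s a b c d : Bool) :
    tst (NF s a b c d) (T 2) = cond (a ^^ (b ^^ d)) 1 0 := by
  simp only [tst, commNF2]
  cases hβ : (a ^^ (b ^^ d)) <;> simp

theorem tstNF3 (s a b c d : Bool) :
    tst (NF s a b c d) (T 3) = cond (a ^^ (b ^^ c)) 1 0 := by
  simp only [tst, commNF3]
  cases hβ : (a ^^ (b ^^ c)) <;> simp

noncomputable def psi (u : Ggrp) : Fin 4 → ZMod 2 :=
  ![tst (mat u) (T 0), tst (mat u) (T 1), tst (mat u) (T 2), tst (mat u) (T 3)]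

theorem psi_mul (u v : Ggrp) : psi (u * v) = psi u + psi v := by
  obtain ⟨s, a, b, c, d, hu⟩ := classify u
  obtain ⟨s', a', b', c', d', hv⟩ := classify v
  have huv : mat (u * v) =
      NF (s ^^ (s' ^^ sgn a b c d a' b' c' d')) (a ^^ a') (b ^^ b') (c ^^ c') (d ^^ d') := by
    rw [mat_mul, hu, hv, NFmul]
  have key : ∀ x1 x2 x3 y1 y2 y3 : Bool,
      (cond ((x1 ^^ y1) ^^ ((x2 ^^ y2) ^^ (x3 ^^ y3))) (1 : ZMod 2) 0) =
        cond (x1 ^^ (x2 ^^ x3)) 1 0 + cond (y1 ^^ (y2 ^^ y3)) 1 0 := by decide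
  funext j
  fin_cases j <;>
    simp only [psi, huv, hu, hv, tstNF0, tstNF1, tstNF2, tstNF3, Pi.add_apply,
      Matrix.cons_val_zero, Matrix.cons_val_one, Matrix.head_cons,
      Matrix.cons_val_two, Matrix.cons_val_three, Matrix.tail_cons, Fin.isValue] <;>
    exact key _ _ _ _ _ _

theorem psi_one : psi 1 = 0 := by
  have h : mat 1 = NF false false false false false := mat_one.trans NFone.symm
  funext j
  fin_cases j <;>
    simp [psi, h, tstNF0, tstNF1, tstNF2, tstNF3]

noncomputable def phi : Ggrp →* Multiplicative (Fin 4 → ZMod 2) where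
  toFun u := Multiplicative.ofAdd (psi u)
  map_one' := by
    show Multiplicative.ofAdd (psi 1) = 1
    rw [psi_one]; rfl
  map_mul' u v := by
    show Multiplicative.ofAdd (psi (u * v)) =
      Multiplicative.ofAdd (psi u) * Multiplicative.ofAdd (psi v)
    rw [psi_mul]; rfl

theorem psi_zero_iff (u : Ggrp) : psi u = 0 ↔ (mat u = 1 ∨ mat u = -1) := by
  constructor
  · intro hz
    obtain ⟨s, a, b, c, d, h⟩ := classify u
    have condeq : ∀ x : Bool, (cond x (1 : ZMod 2) 0 = 0) ↔ x = false := by decide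
    have e0 := congrFun hz 0
    have e1 := congrFun hz 1
    have e2 := congrFun hz 2
    have e3 := congrFun hz 3
    simp only [psi, h, tstNF0, tstNF1, tstNF2, tstNF3, Pi.zero_apply,
      Matrix.cons_val_zero, Matrix.cons_val_one, Matrix.head_cons,
      Matrix.cons_val_two, Matrix.cons_val_three, Matrix.tail_cons, Fin.isValue,
      condeq] at e0 e1 e2 e3
    have hbits : a = false ∧ b = false ∧ c = false ∧ d = false := by
      clear h hz
      revert e0 e1 e2 e3
      revert a b c d
      decide
    obtain ⟨rfl, rfl, rfl, rfl⟩ := hbits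
    rw [h]; exact NF0or s
  · intro h
    have h' : mat u = NF false false false false false ∨
        mat u = NF true false false false false := by
      rcases h with h | h
      · exact Or.inl (h.trans NFone.symm)
      · exact Or.inr (h.trans NFnegone.symm)
    funext j
    rcases h' with h' | h' <;> fin_cases j <;>
      simp [psi, h', tstNF0, tstNF1, tstNF2, tstNF3]

theorem mat_gg0 : mat (gg 0) = NF false true false false false := T0NF
theorem mat_gg1 : mat (gg 1) = NF false false true false false := T1NF
theorem mat_gg2 : mat (gg 2) = NF false false false true false := T2NF
theorem mat_gg3 : mat (gg 3) = NF false false false false true := T3NF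

theorem psi_gg0 : psi (gg 0) = ![0, 1, 1, 1] := by
  funext j
  fin_cases j <;> simp [psi, mat_gg0, tstNF0, tstNF1, tstNF2, tstNF3]
theorem psi_gg1 : psi (gg 1) = ![1, 0, 1, 1] := by
  funext j
  fin_cases j <;> simp [psi, mat_gg1, tstNF0, tstNF1, tstNF2, tstNF3]
theorem psi_gg2 : psi (gg 2) = ![1, 1, 0, 1] := by
  funext j
  fin_cases j <;> simp [psi, mat_gg2, tstNF0, tstNF1, tstNF2, tstNF3]
theorem psi_gg3 : psi (gg 3) = ![1, 1, 1, 0] := by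
  funext j
  fin_cases j <;> simp [psi, mat_gg3, tstNF0, tstNF1, tstNF2, tstNF3]

theorem psi_surj : ∀ y : Fin 4 → ZMod 2, ∃ u : Ggrp, psi u = y := by
  have hz : ∀ z : ZMod 2, z = 0 ∨ z = 1 := by decide
  intro y
  rcases hz (y 0) with h0 | h0 <;> rcases hz (y 1) with h1 | h1 <;>
    rcases hz (y 2) with h2 | h2 <;> rcases hz (y 3) with h3 | h3
  · exact ⟨1, by funext j; rw [psi_one]; fin_cases j <;> simp_all⟩
  · exact ⟨gg 0 * gg 1 * gg 2, by
      funext j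
      rw [psi_mul, psi_mul, psi_gg0, psi_gg1, psi_gg2]
      fin_cases j <;> simp_all <;> decide⟩
  · exact ⟨gg 0 * gg 1 * gg 3, by
      funext j
      rw [psi_mul, psi_mul, psi_gg0, psi_gg1, psi_gg3]
      fin_cases j <;> simp_all <;> decide⟩
  · exact ⟨gg 2 * gg 3, by
      funext j
      rw [psi_mul, psi_gg2, psi_gg3]
      fin_cases j <;> simp_all <;> decide⟩
  · exact ⟨gg 0 * gg 2 * gg 3, by
      funext j
      rw [psi_mul, psi_mul, psi_gg0, psi_gg2, psi_gg3]
      fin_cases j <;> simp_all <;> decide⟩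
  · exact ⟨gg 1 * gg 3, by
      funext j
      rw [psi_mul, psi_gg1, psi_gg3]
      fin_cases j <;> simp_all <;> decide⟩
  · exact ⟨gg 1 * gg 2, by
      funext j
      rw [psi_mul, psi_gg1, psi_gg2]
      fin_cases j <;> simp_all <;> decide⟩
  · exact ⟨gg 0, by
      funext j
      rw [psi_gg0]
      fin_cases j <;> simp_all⟩
  · exact ⟨gg 1 * gg 2 * gg 3, by
      funext j
      rw [psi_mul, psi_mul, psi_gg1, psi_gg2, psi_gg3]
      fin_cases j <;> simp_all <;> decide⟩
  · exact ⟨gg 0 * gg 3, by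
      funext j
      rw [psi_mul, psi_gg0, psi_gg3]
      fin_cases j <;> simp_all <;> decide⟩
  · exact ⟨gg 0 * gg 2, by
      funext j
      rw [psi_mul, psi_gg0, psi_gg2]
      fin_cases j <;> simp_all <;> decide⟩
  · exact ⟨gg 1, by
      funext j
      rw [psi_gg1]
      fin_cases j <;> simp_all⟩
  · exact ⟨gg 0 * gg 1, by
      funext j
      rw [psi_mul, psi_gg0, psi_gg1]
      fin_cases j <;> simp_all <;> decide⟩
  · exact ⟨gg 2, by
      funext j
      rw [psi_gg2]
      fin_cases j <;> simp_all⟩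
  · exact ⟨gg 3, by
      funext j
      rw [psi_gg3]
      fin_cases j <;> simp_all⟩
  · exact ⟨gg 0 * gg 1 * gg 2 * gg 3, by
      funext j
      rw [psi_mul, psi_mul, psi_mul, psi_gg0, psi_gg1, psi_gg2, psi_gg3]
      fin_cases j <;> simp_all <;> decide⟩

theorem phi_surjective : Function.Surjective phi := by
  intro x
  obtain ⟨u, hu⟩ := psi_surj x.toAdd
  exact ⟨u, by show Multiplicative.ofAdd (psi u) = x; rw [hu]; rfl⟩

theorem commutator_eq_ker : commutator Ggrp = phi.ker := by
  ext u
  rw [commutator_eq_K, mem_K_iff, MonoidHom.mem_ker]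
  rw [show phi u = Multiplicative.ofAdd (psi u) from rfl]
  rw [← psi_zero_iff u]
  constructor
  · intro h; rw [h]; rfl
  · intro h
    have := congrArg Multiplicative.toAdd h
    simpa using this

/-- The commutator subgroup of `G` coincides with the center and equals `{I,-I}`;
the abelianization of `G` is isomorphic to `(ℤ/2ℤ)⁴`. -/
theorem stmt5 :
    commutator Ggrp = Subgroup.center Ggrp ∧
    (∀ u : Ggrp, u ∈ commutator Ggrp ↔ (mat u = 1 ∨ mat u = -1)) ∧
    Nonempty (Abelianization Ggrp ≃* Multiplicative (Fin 4 → ZMod 2)) := by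
  refine ⟨?_, ?_, ?_⟩
  · rw [commutator_eq_K, center_eq_K]
  · intro u
    rw [commutator_eq_K]
    exact mem_K_iff u
  · exact ⟨(QuotientGroup.quotientMulEquivOfEq commutator_eq_ker).trans
      (QuotientGroup.quotientKerEquivOfSurjective phi phi_surjective)⟩
end

section
/- The matrix W is invertible, and for every m ∈ {0,…,4} one has W·T_m' = T_m·W, i.e. T_m' = W⁻¹·T_m·W; in particular the subgroup of GL(4,ℂ) generated by T₀',…,T₄' is conjugate to the subgroup generated by T₀,…,T₄. -/
open Matrix Complex

noncomputable def T' : Fin 5 → Matrix (Fin 4) (Fin 4) ℂ :=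
  ![!![1,0,0,0; 0,-1,0,0; 0,-1+I,1,0; 1-I,0,0,-1],
    !![I,-1-I,0,1-I; 0,-I,-1+I,0; 0,-1-I,I,0; 1+I,0,-1-I,-I],
    !![1,0,0,-1-I; 0,-1,1+I,0; 0,0,1,0; 0,0,0,-1],
    !![I,0,0,1-I; 1-I,-I,-1+I,0; 0,-1-I,I,1-I; 1+I,0,0,-I],
    !![1,-1+I,0,-1-I; -1-I,-1,1+I,0; 0,-1+I,1,-1-I; 1-I,0,-1+I,-1]]

noncomputable def Wmat : Matrix (Fin 4) (Fin 4) ℂ :=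
  !![1, 1/2 - I/2, -1, 0;
     1, -1/2 + I/2, 0, -1-I;
     0, -1/2 - I/2, I, 0;
     0, 1/2 + I/2, 0, 0]

lemma Wdet : Wmat.det ≠ 0 := by
  simp [Wmat, Matrix.det_succ_row_zero, Fin.sum_univ_succ, Fin.succAbove, Complex.ext_iff]

set_option maxHeartbeats 1000000 in
lemma Wcomm : ∀ m : Fin 5, Wmat * T' m = T m * Wmat := by
  intro m
  fin_cases m <;>
  · ext i j
    fin_cases i <;> fin_cases j <;>
      simp [Wmat, T, T', Matrix.mul_apply, Fin.sum_univ_succ, Complex.ext_iff] <;> norm_num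

/-- `W` is invertible and `W·T'_m = T_m·W`, i.e. `T'_m = W⁻¹·T_m·W`; in particular the
subgroup of `GL(4,ℂ)` generated by `T'₀,…,T'₄` is conjugate (by `W`) to the one
generated by `T₀,…,T₄`. -/
theorem stmt18 :
    IsUnit Wmat ∧
    (∀ m : Fin 5, Wmat * T' m = T m * Wmat ∧ T' m = Wmat⁻¹ * T m * Wmat) ∧
    (∃ g : (Matrix (Fin 4) (Fin 4) ℂ)ˣ, (g : Matrix (Fin 4) (Fin 4) ℂ) = Wmat ∧
      Subgroup.map (MulAut.conj g).toMonoidHom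
          (Subgroup.closure {h : (Matrix (Fin 4) (Fin 4) ℂ)ˣ |
            ∃ m : Fin 5, (h : Matrix (Fin 4) (Fin 4) ℂ) = T' m})
        = Subgroup.closure {h : (Matrix (Fin 4) (Fin 4) ℂ)ˣ |
            ∃ m : Fin 5, (h : Matrix (Fin 4) (Fin 4) ℂ) = T m}) := by
  have hU : IsUnit Wmat := (Matrix.isUnit_iff_isUnit_det _).2 (isUnit_iff_ne_zero.2 Wdet)
  refine ⟨hU, fun m => ⟨Wcomm m, ?_⟩, ?_⟩
  · rw [mul_assoc, ← Wcomm m, ← mul_assoc, Matrix.nonsing_inv_mul _ (isUnit_iff_ne_zero.2 Wdet), one_mul]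
  · obtain ⟨g, hg⟩ := hU
    refine ⟨g, hg, ?_⟩
    rw [MonoidHom.map_closure]
    congr 1
    ext h
    constructor
    · rintro ⟨h', ⟨m, hm⟩, rfl⟩
      refine ⟨m, ?_⟩
      simp only [MulEquiv.coe_toMonoidHom, MulAut.conj_apply]
      have : (↑(g * h' * g⁻¹) : Matrix (Fin 4) (Fin 4) ℂ) = Wmat * T' m * Wmat⁻¹ := by
        push_cast [hg, hm]
        rfl

      rw [this, Wcomm m, mul_assoc, Matrix.mul_nonsing_inv _ (isUnit_iff_ne_zero.2 Wdet), mul_one]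
    · rintro ⟨m, hm⟩
      refine ⟨g⁻¹ * h * g, ⟨m, ?_⟩, by simp [MulAut.conj_apply]; group⟩
      have : (↑(g⁻¹ * h * g) : Matrix (Fin 4) (Fin 4) ℂ) = Wmat⁻¹ * T m * Wmat := by
        push_cast [hg, hm]
        rfl

      rw [this, mul_assoc, ← Wcomm m, ← mul_assoc, Matrix.nonsing_inv_mul _ (isUnit_iff_ne_zero.2 Wdet), one_mul]
end
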